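/- Let (G,σ,w) be a positive-connected signed graph on n vertices with consensus index ε₀, and let 0 < ε < ε₀. Then the node ε-repelling curvature satisfies, for every vertex i, τ_ε(i) = φ_ε·(1 − (1/2)·∑_{j:j∼i} (w_ij⁺ − ε·w_ij⁻)·Ω_ε(i,j)), where φ_ε = n·1ᵀΩ_ε⁻¹1. -/

import Mathlib

open Matrix BigOperators

open scoped Classical

/-- Moore–Penrose pseudoinverse of a square real matrix (chosen via the
defining Penrose equations; it is unique when it exists). -/
noncomputable def pinv {n : ℕ} (A : Matrix (Fin n) (Fin n) ℝ) : Matrix (Fin n) (Fin n) ℝ :=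
  if h : ∃ B : Matrix (Fin n) (Fin n) ℝ,
      A * B * A = A ∧ B * A * B = B ∧ (A * B)ᵀ = A * B ∧ (B * A)ᵀ = B * A
  then h.choose else 0

/-- The eigenvalues of a symmetric real matrix, sorted in nondecreasing order. -/
noncomputable def sortedEigs {n : ℕ} (A : Matrix (Fin n) (Fin n) ℝ) : List ℝ :=
  if h : A.IsHermitian then (Finset.univ.val.map h.eigenvalues).sort (· ≤ ·) else []

/-- The second smallest eigenvalue (with multiplicity) of a symmetric real matrix. -/
noncomputable def secondSmallestEig {n : ℕ} (A : Matrix (Fin n) (Fin n) ℝ) : ℝ :=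
  (sortedEigs A).getD 1 0

/-- The largest eigenvalue of a symmetric real matrix. -/
noncomputable def largestEig {n : ℕ} (A : Matrix (Fin n) (Fin n) ℝ) : ℝ :=
  (sortedEigs A).getD (n - 1) 0

/-- A signed weighted graph on `n` vertices, given by the positive-part and
negative-part weight functions (an edge carries a positive weight and a sign;
`wplus i j > 0` iff `(i,j)` is a positive edge, `wminus i j > 0` iff it is a
negative edge). -/
structure SignedGraph (n : ℕ) where
  wplus : Fin n → Fin n → ℝ
  wminus : Fin n → Fin n → ℝ
  wplus_symm : ∀ i j, wplus i j = wplus j i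
  wminus_symm : ∀ i j, wminus i j = wminus j i
  wplus_nonneg : ∀ i j, 0 ≤ wplus i j
  wminus_nonneg : ∀ i j, 0 ≤ wminus i j
  wplus_diag : ∀ i, wplus i i = 0
  wminus_diag : ∀ i, wminus i i = 0
  disjoint : ∀ i j, wplus i j = 0 ∨ wminus i j = 0

namespace SignedGraph

variable {n : ℕ} (Γ : SignedGraph n)

/-- positive degree -/
noncomputable def dplus (i : Fin n) : ℝ := ∑ j, Γ.wplus i j

/-- negative degree -/
noncomputable def dminus (i : Fin n) : ℝ := ∑ j, Γ.wminus i j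

/-- Laplacian of the positive subgraph -/
noncomputable def Lplus : Matrix (Fin n) (Fin n) ℝ :=
  Matrix.of fun i j => if i = j then Γ.dplus i else -Γ.wplus i j

/-- Laplacian of the negative subgraph -/
noncomputable def Lminus : Matrix (Fin n) (Fin n) ℝ :=
  Matrix.of fun i j => if i = j then Γ.dminus i else -Γ.wminus i j

/-- the ε-repelling Laplacian `L₊ - ε L₋` -/
noncomputable def Leps (ε : ℝ) : Matrix (Fin n) (Fin n) ℝ := Γ.Lplus - ε • Γ.Lminus

/-- the positive subgraph as a simple graph -/
def posGraph : SimpleGraph (Fin n) := SimpleGraph.fromRel (fun i j => 0 < Γ.wplus i j)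

/-- the negative subgraph as a simple graph -/
def negGraph : SimpleGraph (Fin n) := SimpleGraph.fromRel (fun i j => 0 < Γ.wminus i j)

/-- the underlying simple graph -/
def underlying : SimpleGraph (Fin n) :=
  SimpleGraph.fromRel (fun i j => 0 < Γ.wplus i j + Γ.wminus i j)

/-- the signed graph is positive-connected -/
def PosConnected : Prop := Γ.posGraph.Connected

/-- the signed graph is negative-connected -/
def NegConnected : Prop := Γ.negGraph.Connected

/-- the consensus index ε₀ -/
noncomputable def consensusIndex : ℝ :=
  sSup {ε : ℝ | 0 < ε ∧ (Γ.Leps ε).PosSemidef ∧ (Γ.Leps ε).rank = n - 1}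

/-- the ε-repelling cost Ω_ε(i,j) = (e_i - e_j)ᵀ L_ε† (e_i - e_j) -/
noncomputable def cost (ε : ℝ) (i j : Fin n) : ℝ :=
  (Pi.single i 1 - Pi.single j 1) ⬝ᵥ (pinv (Γ.Leps ε)) *ᵥ (Pi.single i 1 - Pi.single j 1)

/-- the ε-repelling matrix Ω_ε -/
noncomputable def costMatrix (ε : ℝ) : Matrix (Fin n) (Fin n) ℝ :=
  Matrix.of fun i j => Γ.cost ε i j

/-- the node ε-repelling curvature, the unique solution of Ω_ε τ_ε = n·1 -/
noncomputable def tau (ε : ℝ) : Fin n → ℝ :=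
  (Γ.costMatrix ε)⁻¹ *ᵥ (fun _ => (n : ℝ))

/-- φ_ε = n · 1ᵀ Ω_ε⁻¹ 1 -/
noncomputable def phi (ε : ℝ) : ℝ :=
  (n : ℝ) * ((fun _ => (1 : ℝ)) ⬝ᵥ ((Γ.costMatrix ε)⁻¹ *ᵥ fun _ => (1 : ℝ)))

/-- the quantity Λ_ε(i,j) appearing in the edge ε-repelling curvature -/
noncomputable def Lam (ε : ℝ) (i j : Fin n) : ℝ :=
  (Γ.dminus i + Γ.dminus j)
    - (∑ k, Γ.cost ε j k * Γ.wminus i k + ∑ k, Γ.cost ε i k * Γ.wminus j k) / Γ.cost ε i j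

/-- the edge ε-repelling curvature ϑ_ε(i,j) -/
noncomputable def edgeCurv (ε : ℝ) (i j : Fin n) : ℝ :=
  2 * (Γ.tau ε i + Γ.tau ε j) / Γ.cost ε i j + (1 + ε) * Γ.Lam ε i j

end SignedGraph


section Aux

open Matrix

theorem penrose_unique {n : ℕ} (A B C : Matrix (Fin n) (Fin n) ℝ)
    (hB1 : A * B * A = A) (hB2 : B * A * B = B) (hB3 : (A * B)ᵀ = A * B) (hB4 : (B * A)ᵀ = B * A)
    (hC1 : A * C * A = A) (hC2 : C * A * C = C) (hC3 : (A * C)ᵀ = A * C) (hC4 : (C * A)ᵀ = C * A) :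
    B = C := by
  have hAB : A * B = A * C := by
    calc A * B = (A * C * A) * B := by rw [hC1]
      _ = (A * C) * (A * B) := by noncomm_ring
      _ = (A * C)ᵀ * (A * B)ᵀ := by rw [hC3, hB3]
      _ = (A * B * (A * C))ᵀ := by rw [← Matrix.transpose_mul]
      _ = (A * B * A * C)ᵀ := by rw [Matrix.mul_assoc (A * B)]
      _ = (A * C)ᵀ := by rw [hB1]
      _ = A * C := hC3
  have hBA : B * A = C * A := by
    calc B * A = B * (A * C * A) := by rw [hC1]
      _ = (B * A) * (C * A) := by noncomm_ring
      _ = (B * A)ᵀ * (C * A)ᵀ := by rw [hB4, hC4]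
      _ = (C * A * (B * A))ᵀ := by rw [← Matrix.transpose_mul]
      _ = (C * (A * B * A))ᵀ := by noncomm_ring
      _ = (C * A)ᵀ := by rw [hB1]
      _ = C * A := hC4
  calc B = B * A * B := hB2.symm
    _ = C * A * B := by rw [hBA]
    _ = C * (A * B) := Matrix.mul_assoc _ _ _
    _ = C * (A * C) := by rw [hAB]
    _ = C * A * C := (Matrix.mul_assoc _ _ _).symm
    _ = C := hC2

theorem exists_penrose {n : ℕ} (A : Matrix (Fin n) (Fin n) ℝ) (hAt : Aᵀ = A) :
    ∃ B : Matrix (Fin n) (Fin n) ℝ,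
      A * B * A = A ∧ B * A * B = B ∧ (A * B)ᵀ = A * B ∧ (B * A)ᵀ = B * A ∧ Bᵀ = B := by
  have hA : A.IsHermitian := by
    rw [Matrix.IsHermitian, Matrix.conjTranspose_eq_transpose_of_trivial]; exact hAt
  set U : Matrix (Fin n) (Fin n) ℝ := (hA.eigenvectorUnitary : Matrix (Fin n) (Fin n) ℝ) with hU
  have hU1 : star U * U = 1 := (Matrix.mem_unitaryGroup_iff').mp (hA.eigenvectorUnitary).2
  set d : Fin n → ℝ := RCLike.ofReal ∘ hA.eigenvalues with hd
  have hspec : A = U * Matrix.diagonal d * star U := hA.spectral_theorem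
  have key : ∀ f g : Fin n → ℝ,
      (U * Matrix.diagonal f * star U) * (U * Matrix.diagonal g * star U)
        = U * Matrix.diagonal (fun i => f i * g i) * star U := by
    intro f g
    have h : Matrix.diagonal f * (star U * U) * Matrix.diagonal g
        = Matrix.diagonal (fun i => f i * g i) := by
      rw [hU1, mul_one, Matrix.diagonal_mul_diagonal]
    calc (U * Matrix.diagonal f * star U) * (U * Matrix.diagonal g * star U)
        = U * (Matrix.diagonal f * (star U * U) * Matrix.diagonal g) * star U := by
          noncomm_ring
      _ = U * Matrix.diagonal (fun i => f i * g i) * star U := by rw [h]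
  have sym : ∀ f : Fin n → ℝ,
      (U * Matrix.diagonal f * star U)ᵀ = U * Matrix.diagonal f * star U := by
    intro f
    have h : (U * Matrix.diagonal f * star U)ᴴ = U * Matrix.diagonal f * star U := by
      rw [star_eq_conjTranspose, Matrix.conjTranspose_mul, Matrix.conjTranspose_mul,
        Matrix.conjTranspose_conjTranspose, Matrix.diagonal_conjTranspose]
      simp [Matrix.mul_assoc, star_trivial]
    rw [← Matrix.conjTranspose_eq_transpose_of_trivial, h]
  refine ⟨U * Matrix.diagonal (fun i => (d i)⁻¹) * star U, ?_, ?_, ?_, ?_, sym _⟩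
  · rw [hspec, key, key]
    congr 2
    funext i
    by_cases h : d i = 0 <;> field_simp [h]
  · rw [hspec, key, key]
    congr 2
    funext i
    by_cases h : d i = 0 <;> field_simp [h]
  · rw [hspec, key]; exact sym _
  · rw [hspec, key]; exact sym _

theorem pinv_spec {n : ℕ} (A : Matrix (Fin n) (Fin n) ℝ) (hA : Aᵀ = A) :
    A * pinv A * A = A ∧ pinv A * A * pinv A = pinv A ∧ (A * pinv A)ᵀ = A * pinv A ∧
      (pinv A * A)ᵀ = pinv A * A ∧ (pinv A)ᵀ = pinv A := by
  obtain ⟨B, h1, h2, h3, h4, h5⟩ := exists_penrose A hA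
  have hex : ∃ B : Matrix (Fin n) (Fin n) ℝ,
      A * B * A = A ∧ B * A * B = B ∧ (A * B)ᵀ = A * B ∧ (B * A)ᵀ = B * A := ⟨B, h1, h2, h3, h4⟩
  have hp : pinv A = hex.choose := by rw [pinv, dif_pos hex]
  obtain ⟨g1, g2, g3, g4⟩ := hex.choose_spec
  rw [← hp] at g1 g2 g3 g4
  have hBP : pinv A = B := penrose_unique A (pinv A) B g1 g2 g3 g4 h1 h2 h3 h4
  exact ⟨g1, g2, g3, g4, by rw [hBP, h5]⟩

theorem lap_mulVec {n : ℕ} (w : Fin n → Fin n → ℝ) (hdiag : ∀ i, w i i = 0)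
    (x : Fin n → ℝ) (i : Fin n) :
    ((Matrix.of fun i j => if i = j then (∑ k, w i k) else -w i j) *ᵥ x) i
      = ∑ j, w i j * (x i - x j) := by
  have h1 : ∀ j : Fin n, (if i = j then (∑ k, w i k) else -w i j) * x j
      = (if i = j then (∑ k, w i k) * x j + w i j * x j else 0) - w i j * x j := by
    intro j
    by_cases h : i = j <;> simp [h]
  simp only [Matrix.mulVec, dotProduct, Matrix.of_apply]
  rw [Finset.sum_congr rfl fun j _ => h1 j, Finset.sum_sub_distrib, Finset.sum_ite_eq]
  simp only [Finset.mem_univ, if_true, Finset.sum_mul, hdiag i, zero_mul, add_zero]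
  rw [← Finset.sum_sub_distrib]
  exact Finset.sum_congr rfl fun j _ => by ring

theorem lap_quad {n : ℕ} (w : Fin n → Fin n → ℝ) (hsymm : ∀ i j, w i j = w j i)
    (hdiag : ∀ i, w i i = 0) (x : Fin n → ℝ) :
    x ⬝ᵥ ((Matrix.of fun i j => if i = j then (∑ k, w i k) else -w i j) *ᵥ x)
      = (1/2) * ∑ i, ∑ j, w i j * (x i - x j)^2 := by
  have A : x ⬝ᵥ ((Matrix.of fun i j => if i = j then (∑ k, w i k) else -w i j) *ᵥ x)
      = ∑ i, ∑ j, w i j * (x i * (x i - x j)) := by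
    simp only [dotProduct]
    refine Finset.sum_congr rfl fun i _ => ?_
    rw [lap_mulVec w hdiag, Finset.mul_sum]
    exact Finset.sum_congr rfl fun j _ => by ring
  have B : ∑ i, ∑ j, w i j * (x j * (x j - x i)) = ∑ i, ∑ j, w i j * (x i * (x i - x j)) := by
    rw [Finset.sum_comm]
    exact Finset.sum_congr rfl fun i _ => Finset.sum_congr rfl fun j _ => by rw [hsymm]
  rw [A]
  have C : ∑ i, ∑ j, w i j * (x i - x j)^2
      = (∑ i, ∑ j, w i j * (x i * (x i - x j))) + ∑ i, ∑ j, w i j * (x j * (x j - x i)) := by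
    rw [← Finset.sum_add_distrib]
    refine Finset.sum_congr rfl fun i _ => ?_
    rw [← Finset.sum_add_distrib]
    exact Finset.sum_congr rfl fun j _ => by ring
  rw [C, B]; ring

theorem lap_mulVec_const {n : ℕ} (w : Fin n → Fin n → ℝ) (hdiag : ∀ i, w i i = 0) (c : ℝ) :
    ((Matrix.of fun i j => if i = j then (∑ k, w i k) else -w i j) *ᵥ (fun _ => c)) = 0 := by
  funext i
  rw [lap_mulVec w hdiag]
  simp

theorem lap_transpose {n : ℕ} (w : Fin n → Fin n → ℝ) (hsymm : ∀ i j, w i j = w j i) :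
    (Matrix.of fun i j => if i = j then (∑ k, w i k) else -w i j)ᵀ
      = (Matrix.of fun i j => if i = j then (∑ k, w i k) else -w i j) := by
  ext i j
  simp only [Matrix.transpose_apply, Matrix.of_apply]
  by_cases h : i = j
  · simp [h]
  · simp [h, Ne.symm h, hsymm i j]

end Aux

namespace SignedGraph

variable {n : ℕ} (Γ : SignedGraph n)

theorem Lplus_eq : Γ.Lplus
    = Matrix.of fun i j => if i = j then (∑ k, Γ.wplus i k) else -Γ.wplus i j := rfl

theorem Lminus_eq : Γ.Lminus
    = Matrix.of fun i j => if i = j then (∑ k, Γ.wminus i k) else -Γ.wminus i j := rfl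

theorem Leps_transpose (ε : ℝ) : (Γ.Leps ε)ᵀ = Γ.Leps ε := by
  rw [Leps, Matrix.transpose_sub, Matrix.transpose_smul, Lplus_eq, Lminus_eq,
    lap_transpose _ Γ.wplus_symm, lap_transpose _ Γ.wminus_symm]

theorem Leps_mulVec_const (ε : ℝ) (c : ℝ) : Γ.Leps ε *ᵥ (fun _ => c) = 0 := by
  rw [Leps, Matrix.sub_mulVec, Matrix.smul_mulVec, Lplus_eq, Lminus_eq,
    lap_mulVec_const _ Γ.wplus_diag, lap_mulVec_const _ Γ.wminus_diag]
  simp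

theorem kernel_lemma (hpc : Γ.PosConnected) (ε ε' : ℝ) (hε0 : 0 < ε) (hlt : ε < ε')
    (hpsd : (Γ.Leps ε').PosSemidef) (x : Fin n → ℝ) (hx : Γ.Leps ε *ᵥ x = 0) :
    ∀ j k, x j = x k := by
  have hε' : 0 < ε' := hε0.trans hlt
  set t : ℝ := ε / ε' with ht
  have ht0 : 0 < t := div_pos hε0 hε'
  have ht1 : t < 1 := (div_lt_one hε').mpr hlt
  have htε : t * ε' = ε := div_mul_cancel₀ ε (ne_of_gt hε')
  have decomp : Γ.Leps ε = (1 - t) • Γ.Lplus + t • Γ.Leps ε' := by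
    rw [Leps, Leps, smul_sub, smul_smul, htε]
    module
  have hq0 : (0:ℝ) = (1 - t) * (x ⬝ᵥ (Γ.Lplus *ᵥ x)) + t * (x ⬝ᵥ (Γ.Leps ε' *ᵥ x)) := by
    have h1 : x ⬝ᵥ (Γ.Leps ε *ᵥ x) = 0 := by rw [hx]; simp
    rw [decomp] at h1
    rw [← h1, Matrix.add_mulVec, dotProduct_add, Matrix.smul_mulVec,
      Matrix.smul_mulVec, dotProduct_smul, dotProduct_smul]
    simp [smul_eq_mul]
  have hq1 : x ⬝ᵥ (Γ.Lplus *ᵥ x) = (1/2) * ∑ i, ∑ j, Γ.wplus i j * (x i - x j)^2 := by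
    rw [Lplus_eq]; exact lap_quad _ Γ.wplus_symm Γ.wplus_diag x
  have hnn1 : 0 ≤ x ⬝ᵥ (Γ.Lplus *ᵥ x) := by
    rw [hq1]
    have : ∀ i ∈ Finset.univ, (0:ℝ) ≤ ∑ j, Γ.wplus i j * (x i - x j)^2 := by
      intro i _
      exact Finset.sum_nonneg fun j _ => mul_nonneg (Γ.wplus_nonneg i j) (sq_nonneg _)
    nlinarith [Finset.sum_nonneg this]
  have hnn2 : 0 ≤ x ⬝ᵥ (Γ.Leps ε' *ᵥ x) := by
    have := hpsd.dotProduct_mulVec_nonneg x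
    simpa [star_trivial] using this
  have hzero : x ⬝ᵥ (Γ.Lplus *ᵥ x) = 0 := by nlinarith
  have hsum0 : ∑ i, ∑ j, Γ.wplus i j * (x i - x j)^2 = 0 := by
    rw [hq1] at hzero; linarith
  have hterm : ∀ u v : Fin n, Γ.wplus u v * (x u - x v)^2 = 0 := by
    intro u v
    have houter := (Finset.sum_eq_zero_iff_of_nonneg (fun i _ =>
      Finset.sum_nonneg fun j _ =>
        mul_nonneg (Γ.wplus_nonneg i j) (sq_nonneg _))).mp hsum0 u (Finset.mem_univ u)
    exact (Finset.sum_eq_zero_iff_of_nonneg (fun j _ =>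
      mul_nonneg (Γ.wplus_nonneg u j) (sq_nonneg _))).mp houter v (Finset.mem_univ v)
  have step : ∀ u v : Fin n, Γ.posGraph.Adj u v → x u = x v := by
    intro u v huv
    rw [posGraph, SimpleGraph.fromRel_adj] at huv
    have hw : 0 < Γ.wplus u v := by
      rcases huv.2 with h | h
      · exact h
      · rw [Γ.wplus_symm]; exact h
    have := hterm u v
    have h2 : (x u - x v)^2 = 0 := by
      rcases mul_eq_zero.mp this with h | h
      · exact absurd h (ne_of_gt hw)
      · exact h
    have := pow_eq_zero_iff (n := 2) (by norm_num) |>.mp h2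
    linarith [sub_eq_zero.mp this]
  intro j k
  obtain ⟨p⟩ := hpc.preconnected j k
  induction p with
  | nil => rfl
  | cons h p ih => exact (step _ _ h).trans ih

end SignedGraph

/-- explicit formula for the node ε-repelling curvature. -/
theorem stmt15 {n : ℕ} (Γ : SignedGraph n) (hpc : Γ.PosConnected)
    (ε : ℝ) (hε0 : 0 < ε) (hε : ε < Γ.consensusIndex) (i : Fin n) :
    Γ.tau ε i =
      Γ.phi ε *
        (1 - (1 / 2) * ∑ j : Fin n, (Γ.wplus i j - ε * Γ.wminus i j) * Γ.cost ε i j) := by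
  have hn : 0 < n := i.pos
  have hnR : (0:ℝ) < n := by exact_mod_cast hn
  set L : Matrix (Fin n) (Fin n) ℝ := Γ.Leps ε with hLdef
  have hLsym : Lᵀ = L := Γ.Leps_transpose ε
  have hL1 : L *ᵥ (fun _ => (1:ℝ)) = 0 := Γ.Leps_mulVec_const ε 1
  -- extract ε' with ε < ε' and PSD
  set S : Set ℝ := {ε : ℝ | 0 < ε ∧ (Γ.Leps ε).PosSemidef ∧ (Γ.Leps ε).rank = n - 1} with hS
  have hεS : ε < sSup S := hε
  have h1 : S.Nonempty := by
    by_contra h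
    rw [Set.not_nonempty_iff_eq_empty] at h
    rw [h, Real.sSup_empty] at hεS
    linarith
  obtain ⟨ε', hε'S, hltε⟩ := exists_lt_of_lt_csSup h1 hεS
  have hker : ∀ x : Fin n → ℝ, L *ᵥ x = 0 → ∀ j k, x j = x k :=
    fun x hx => Γ.kernel_lemma hpc ε ε' hε0 hltε hε'S.2.1 x hx
  set H : Matrix (Fin n) (Fin n) ℝ := pinv L with hHdef
  obtain ⟨p1, p2, p3, p4, p5⟩ := pinv_spec L hLsym
  rw [← hHdef] at p1 p2 p3 p4 p5
  have hcomm : L * H = H * L := by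
    conv_lhs => rw [← p3]
    rw [Matrix.transpose_mul, p5, hLsym]
  have hLH1 : (L * H) *ᵥ (fun _ => (1:ℝ)) = 0 := by
    rw [hcomm, ← Matrix.mulVec_mulVec, hL1, Matrix.mulVec_zero]
  have hH1 : H *ᵥ (fun _ => (1:ℝ)) = 0 := by
    calc H *ᵥ (fun _ => (1:ℝ)) = (H * (L * H)) *ᵥ (fun _ => (1:ℝ)) := by
          rw [← Matrix.mul_assoc, p2]
      _ = H *ᵥ ((L * H) *ᵥ (fun _ => (1:ℝ))) := by rw [Matrix.mulVec_mulVec]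
      _ = 0 := by rw [hLH1, Matrix.mulVec_zero]
  have hHL : ∀ x : Fin n → ℝ,
      (H * L) *ᵥ x = x - ((∑ j, x j)/n) • (fun _ => (1:ℝ)) := by
    intro x
    set y : Fin n → ℝ := x - (H * L) *ᵥ x with hy
    have hLy : L *ᵥ y = 0 := by
      rw [hy, Matrix.mulVec_sub, Matrix.mulVec_mulVec, ← Matrix.mul_assoc, p1, sub_self]
    have hconst := hker y hLy
    have hsumHL : ∑ j, ((H * L) *ᵥ x) j = 0 := by
      have e1 : ∑ j, ((H * L) *ᵥ x) j = (fun _ => (1:ℝ)) ⬝ᵥ ((H * L) *ᵥ x) := by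
        simp [dotProduct]
      rw [e1, Matrix.dotProduct_mulVec, ← Matrix.mulVec_transpose,
        Matrix.transpose_mul, p5, hLsym, hLH1]
      simp [dotProduct]
    have hsumy : ∑ j, y j = ∑ j, x j := by
      simp only [hy, Pi.sub_apply, Finset.sum_sub_distrib, hsumHL, sub_zero]
    have hyval : ∀ j, y j = (∑ k, x k)/n := by
      intro j
      have : ∑ k, y k = n * y j := by
        rw [Finset.sum_congr rfl fun k _ => hconst k j]
        simp [mul_comm]
      rw [← hsumy, this]
      field_simp
    funext j
    have := hyval j
    simp only [hy, Pi.sub_apply] at this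
    simp only [Pi.sub_apply, Pi.smul_apply, smul_eq_mul, mul_one]
    linarith
  have hHLdiag : ∀ j, (H * L) j j = 1 - 1/n := by
    intro j
    have h := congrFun (hHL (Pi.single j 1)) j
    rw [Matrix.mulVec_single] at h
    simp only [mul_one, Pi.sub_apply, Pi.smul_apply, smul_eq_mul, mul_one,
      Pi.single_eq_same, Finset.sum_pi_single] at h
    simpa using h
  set g : Fin n → ℝ := fun j => H j j with hg
  have hHsymm : ∀ j k : Fin n, H k j = H j k := by
    intro j k
    conv_lhs => rw [← p5]
    rfl
  have hcost : ∀ j k, Γ.cost ε j k = g j + g k - 2 * H j k := by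
    intro j k
    show (Pi.single j 1 - Pi.single k 1) ⬝ᵥ H *ᵥ (Pi.single j 1 - Pi.single k 1)
        = g j + g k - 2 * H j k
    rw [Matrix.mulVec_sub, Matrix.mulVec_single, Matrix.mulVec_single]
    simp only [mul_one, sub_dotProduct, dotProduct_sub,
      single_dotProduct, one_mul, MulOpposite.op_one, one_smul, Matrix.col_apply]
    rw [hHsymm j k]
    simp only [hg]
    ring
  have hcost0 : ∀ j, Γ.cost ε j j = 0 := by
    intro j; rw [hcost]; simp only [hg]; ring
  set u : Fin n → ℝ := fun j => (L *ᵥ g) j / 2 + 1/n with hu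
  have hsumLg : ∑ j, (L *ᵥ g) j = 0 := by
    have e1 : ∑ j, (L *ᵥ g) j = (fun _ => (1:ℝ)) ⬝ᵥ (L *ᵥ g) := by
      simp [dotProduct]
    rw [e1, Matrix.dotProduct_mulVec, ← Matrix.mulVec_transpose, hLsym, hL1]
    simp [dotProduct]
  have hsumu : ∑ j, u j = 1 := by
    simp only [hu]
    rw [Finset.sum_add_distrib, ← Finset.sum_div, hsumLg, Finset.sum_const, Finset.card_univ]
    simp only [Fintype.card_fin, nsmul_eq_mul, zero_div, zero_add, mul_one_div]
    exact div_self (ne_of_gt hnR)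
  set c : ℝ := (g ⬝ᵥ (L *ᵥ g))/2 + 2*(∑ j, g j)/n with hc
  have hHu : ∀ j, (H *ᵥ u) j = (1/2) * (g j - (∑ k, g k)/n) := by
    intro j
    have hudecomp : u = (1/2:ℝ) • (L *ᵥ g) + (1/n:ℝ) • (fun _ => (1:ℝ)) := by
      funext k
      simp only [hu, Pi.add_apply, Pi.smul_apply, smul_eq_mul, mul_one]
      ring
    rw [hudecomp, Matrix.mulVec_add, Matrix.mulVec_smul, Matrix.mulVec_smul, hH1,
      Matrix.mulVec_mulVec, hHL g]
    simp only [Pi.add_apply, Pi.smul_apply, Pi.sub_apply, smul_eq_mul, smul_zero,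
      Pi.zero_apply, mul_one, add_zero]
  have hOmegau : (Γ.costMatrix ε) *ᵥ u = fun _ => c := by
    funext j
    have e1 : ((Γ.costMatrix ε) *ᵥ u) j = ∑ k, (g j + g k - 2 * H j k) * u k := by
      simp only [Matrix.mulVec, dotProduct, SignedGraph.costMatrix, Matrix.of_apply]
      exact Finset.sum_congr rfl fun k _ => by rw [hcost j k]
    rw [e1]
    have e2 : ∀ k, (g j + g k - 2 * H j k) * u k
        = g j * u k + g k * u k - 2 * (H j k * u k) := fun k => by ring
    rw [Finset.sum_congr rfl fun k _ => e2 k, Finset.sum_sub_distrib, Finset.sum_add_distrib,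
      ← Finset.mul_sum, hsumu, ← Finset.mul_sum]
    have e3 : ∑ k, H j k * u k = (H *ᵥ u) j := by
      simp [Matrix.mulVec, dotProduct]
    rw [e3, hHu j]
    have e4 : ∑ k, g k * u k = (g ⬝ᵥ (L *ᵥ g))/2 + (∑ k, g k)/n := by
      simp only [hu, dotProduct]
      rw [Finset.sum_congr rfl (fun k _ => by
        show g k * ((L *ᵥ g) k / 2 + 1/n) = g k * (L *ᵥ g) k / 2 + g k * (1/n)
        ring), Finset.sum_add_distrib]
      congr 1
      · rw [← Finset.sum_div]
      · rw [Finset.sum_congr rfl fun k _ => mul_one_div (g k) (n:ℝ), ← Finset.sum_div]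
    rw [e4, hc]
    ring
  have hui : ∀ j, u j = 1 - (1/2) * ∑ k, (Γ.wplus j k - ε * Γ.wminus j k) * Γ.cost ε j k := by
    intro j
    have hLentry : ∀ k, k ≠ j → L j k = -(Γ.wplus j k - ε * Γ.wminus j k) := by
      intro k hk
      show (Γ.Lplus - ε • Γ.Lminus) j k = _
      simp only [Matrix.sub_apply, Matrix.smul_apply, SignedGraph.Lplus, SignedGraph.Lminus, Matrix.of_apply,
        if_neg (Ne.symm hk), smul_eq_mul]
      ring
    have hsw : ∑ k, (Γ.wplus j k - ε * Γ.wminus j k) * Γ.cost ε j k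
        = -∑ k, L j k * Γ.cost ε j k := by
      rw [← Finset.sum_neg_distrib]
      refine Finset.sum_congr rfl fun k _ => ?_
      by_cases hk : k = j
      · subst hk
        rw [hcost0, Γ.wplus_diag, Γ.wminus_diag]
        ring
      · rw [hLentry k hk]
        ring
    have hLrow : ∑ k, L j k = 0 := by
      have := congrFun hL1 j
      simpa [Matrix.mulVec, dotProduct] using this
    have hLHdd : ∑ k, L j k * H j k = 1 - 1/n := by
      have e : ∑ k, L j k * H j k = (L * H) j j := by
        simp only [Matrix.mul_apply]
        exact Finset.sum_congr rfl fun k _ => by rw [hHsymm j k]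
      rw [e, hcomm, hHLdiag]
    have hLc : ∑ k, L j k * Γ.cost ε j k = (L *ᵥ g) j - 2 * (1 - 1/n) := by
      rw [Finset.sum_congr rfl fun k _ => by rw [hcost j k]]
      have e2 : ∀ k, L j k * (g j + g k - 2 * H j k)
          = g j * L j k + L j k * g k - 2 * (L j k * H j k) := fun k => by ring
      rw [Finset.sum_congr rfl fun k _ => e2 k, Finset.sum_sub_distrib,
        Finset.sum_add_distrib, ← Finset.mul_sum, hLrow, ← Finset.mul_sum, hLHdd]
      have e3 : ∑ k, L j k * g k = (L *ᵥ g) j := by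
        simp [Matrix.mulVec, dotProduct]
      rw [e3]
      ring
    rw [hsw, hLc, hu]
    ring
  by_cases hdet : IsUnit (Γ.costMatrix ε).det
  · have hcne : c ≠ 0 := by
      intro h0
      have hzero : (Γ.costMatrix ε) *ᵥ u = 0 := by
        rw [hOmegau, h0]
        rfl
      have hu0 : u = 0 := by
        calc u = (1 : Matrix (Fin n) (Fin n) ℝ) *ᵥ u := (Matrix.one_mulVec u).symm
          _ = ((Γ.costMatrix ε)⁻¹ * Γ.costMatrix ε) *ᵥ u := by
              rw [Matrix.nonsing_inv_mul _ hdet]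
          _ = (Γ.costMatrix ε)⁻¹ *ᵥ ((Γ.costMatrix ε) *ᵥ u) := by
              rw [Matrix.mulVec_mulVec]
          _ = 0 := by rw [hzero, Matrix.mulVec_zero]
      rw [hu0] at hsumu
      simp at hsumu
    have hinv1 : (Γ.costMatrix ε)⁻¹ *ᵥ (fun _ => (1:ℝ)) = c⁻¹ • u := by
      have e : (fun _ => (1:ℝ)) = c⁻¹ • ((Γ.costMatrix ε) *ᵥ u) := by
        rw [hOmegau]
        funext k
        simp [inv_mul_cancel₀ hcne]
      rw [e, Matrix.mulVec_smul, Matrix.mulVec_mulVec, Matrix.nonsing_inv_mul _ hdet,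
        Matrix.one_mulVec]
    have htau : Γ.tau ε i = n * (c⁻¹ * u i) := by
      show ((Γ.costMatrix ε)⁻¹ *ᵥ (fun _ => (n:ℝ))) i = n * (c⁻¹ * u i)
      have e : (fun _ : Fin n => (n:ℝ)) = (n:ℝ) • (fun _ : Fin n => (1:ℝ)) := by
        funext k; simp
      rw [e, Matrix.mulVec_smul, hinv1]
      simp [smul_eq_mul]
    have hphi : Γ.phi ε = n * c⁻¹ := by
      show (n:ℝ) * ((fun _ => (1:ℝ)) ⬝ᵥ ((Γ.costMatrix ε)⁻¹ *ᵥ fun _ => (1:ℝ))) = n * c⁻¹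
      rw [hinv1]
      congr 1
      simp only [dotProduct, Pi.smul_apply, smul_eq_mul, one_mul]
      rw [← Finset.mul_sum, hsumu, mul_one]
    rw [htau, hphi, ← hui i]
    ring
  · have h0 : (Γ.costMatrix ε)⁻¹ = 0 := Matrix.nonsing_inv_apply_not_isUnit _ hdet
    have htau : Γ.tau ε i = 0 := by
      show ((Γ.costMatrix ε)⁻¹ *ᵥ (fun _ => (n:ℝ))) i = 0
      rw [h0, Matrix.zero_mulVec]
      rfl
    have hphi : Γ.phi ε = 0 := by
      show (n:ℝ) * ((fun _ => (1:ℝ)) ⬝ᵥ ((Γ.costMatrix ε)⁻¹ *ᵥ fun _ => (1:ℝ))) = 0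
      rw [h0, Matrix.zero_mulVec]
      simp [dotProduct]
    rw [htau, hphi, zero_mul]
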